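/- Let M be a nonzero persistence module over ℤⁿ of finite total dimension. Then M admits no free resolution of length strictly less than n: there is no exact sequence 0 → F_m → F_{m−1} → ⋯ → F_1 → F_0 → M → 0 of persistence modules with m < n in which every F_i is free of finite rank (a finite direct sum of modules F(z) with z ∈ ℤⁿ). -/

import Mathlib

/-!
STATEMENT 15: A nonzero persistence module over `ℤⁿ` of finite total dimension admits no
free resolution of length strictly less than `n`.

Persistence modules over `ℤⁿ` are formalized as functors `(Fin n → ℤ) ⥤ ModuleCat k`;
exactness is componentwise.  The free module `F(z)` (for `z ∈ ℤⁿ`) is realized gradewise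
as the submodule `gate k P = {x : k | P ∨ x = 0}` of `k` (which is `k` iff `z ≤ v`), with
the canonical structure maps; a module is free of finite rank iff it is isomorphic to a
finite direct sum of such `F(z)`.  A finite exact sequence
`0 → F_m → ⋯ → F_1 → F_0 → M → 0` is encoded as an `ℕ`-indexed resolution
`⋯ → F_1 → F_0 → M → 0` (exact everywhere) with `F_i = 0` for `i > m`.
-/

open CategoryTheory Limits

attribute [-instance] CategoryTheory.pi

noncomputable instance (k : Type) [Field k] (n : ℕ) :
    HasFiniteBiproducts ((Fin n → ℤ) ⥤ ModuleCat k) :=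
  @Abelian.hasFiniteBiproducts _ _ inferInstance

variable (k : Type) [Field k]

/-- The submodule `{x : k | P ∨ x = 0}` of `k`: it is all of `k` if `P` holds, and `0` otherwise. -/
def gate (P : Prop) : Submodule k k where
  carrier := {x | P ∨ x = 0}
  add_mem' := by
    rintro a b (h | ha) hb
    · exact Or.inl h
    · rcases hb with h | hb
      · exact Or.inl h
      · exact Or.inr (by rw [ha, hb, add_zero])
  zero_mem' := Or.inr rfl
  smul_mem' := by
    rintro c x (h | hx)
    · exact Or.inl h
    · exact Or.inr (by rw [hx, smul_zero])

lemma gate_mono {P Q : Prop} (h : P → Q) : gate k P ≤ gate k Q := fun _ hx => hx.imp h id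

variable (n : ℕ)

/-- The free persistence module `F(z)`, `z ∈ ℤⁿ`:  `F(z)_v = k` if `z ≤ v` and `0`
otherwise, with identity structure maps between nonzero components. -/
def freeF (z : Fin n → ℤ) : (Fin n → ℤ) ⥤ ModuleCat k where
  obj v := ModuleCat.of k (gate k (∀ i, z i ≤ v i))
  map {v w} h := ModuleCat.ofHom (Submodule.inclusion
    (gate_mono k (fun hc i => le_trans (hc i) (leOfHom h i))))
  map_id := fun _ => rfl
  map_comp := fun _ _ => rfl

/-- A persistence module is free of finite rank iff it is isomorphic to a finite direct
sum `⊕_{t=1}^r F(z_t)` with `z_t ∈ ℤⁿ`. -/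
def IsFiniteRankFree (M : (Fin n → ℤ) ⥤ ModuleCat k) : Prop :=
  ∃ (r : ℕ) (z : Fin r → (Fin n → ℤ)),
    Nonempty (M ≅ ⨁ (fun t : Fin r => freeF k n (z t)))


namespace S15

open Function

section SliceDef

variable {k : Type} [Field k] {Γ : Type} [Preorder Γ] {ι ι' : Type}

def Slice (z : ι → Γ) (v : Γ) : Submodule k (ι → k) where
  carrier := {f | ∀ t, ¬ z t ≤ v → f t = 0}
  add_mem' := fun hf hg t ht => by
    simp only [Pi.add_apply, hf t ht, hg t ht, add_zero]
  zero_mem' := fun t _ => rfl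
  smul_mem' := fun c f hf t ht => by
    simp only [Pi.smul_apply, hf t ht, smul_zero]

lemma slice_mono {z : ι → Γ} {u v : Γ} (huv : u ≤ v) :
    Slice (k := k) z u ≤ Slice (k := k) z v :=
  fun f hf t ht => hf t (fun hle => ht (hle.trans huv))

instance slice_subsingleton [IsEmpty ι] (z : ι → Γ) (v : Γ) :
    Subsingleton (Slice (k := k) z v) :=
  ⟨fun f g => Subtype.ext (funext fun t => isEmptyElim t)⟩

variable [Fintype ι]

def Dmap {z : ι → Γ} {z' : ι' → Γ} (c : ι' → ι → k)
    (hc : ∀ s t, c s t ≠ 0 → z' s ≤ z t) (v : Γ) :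
    Slice (k := k) z v →ₗ[k] Slice (k := k) z' v where
  toFun f := ⟨fun s => ∑ t, c s t * f.1 t, by
    intro s hs
    refine Finset.sum_eq_zero fun t _ => ?_
    by_cases h0 : c s t = 0
    · rw [h0, zero_mul]
    · by_cases h1 : z t ≤ v
      · exact absurd ((hc s t h0).trans h1) hs
      · rw [f.2 t h1, mul_zero]⟩
  map_add' f g := Subtype.ext (funext fun s => by
    simp [mul_add, Finset.sum_add_distrib])
  map_smul' a f := Subtype.ext (funext fun s => by
    simp only [Submodule.coe_smul, Pi.smul_apply, smul_eq_mul, RingHom.id_apply]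
    rw [Finset.mul_sum]
    exact Finset.sum_congr rfl fun t _ => by ring)

lemma Dmap_apply_coe {z : ι → Γ} {z' : ι' → Γ} (c : ι' → ι → k)
    (hc : ∀ s t, c s t ≠ 0 → z' s ≤ z t) (v : Γ) (f : Slice (k := k) z v) (s : ι') :
    (Dmap c hc v f).1 s = ∑ t, c s t * f.1 t := rfl

def inclS {z : ι → Γ} {u v : Γ} (huv : u ≤ v) :
    Slice (k := k) z u →ₗ[k] Slice (k := k) z v :=
  Submodule.inclusion (slice_mono huv)

lemma inclS_injective {z : ι → Γ} {u v : Γ} (huv : u ≤ v) :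
    Function.Injective (inclS (k := k) (z := z) huv) :=
  Submodule.inclusion_injective _

lemma inclS_comm {z : ι → Γ} {z' : ι' → Γ} (c : ι' → ι → k)
    (hc : ∀ s t, c s t ≠ 0 → z' s ≤ z t) {u v : Γ} (huv : u ≤ v)
    (f : Slice (k := k) z u) :
    inclS (z := z') huv (Dmap c hc u f) = Dmap c hc v (inclS huv f) :=
  Subtype.ext rfl

end SliceDef

section Reduce

variable {k : Type} [Field k] {n : ℕ}

lemma le_snoc_iff {a : Fin (n+1) → ℤ} {w : Fin n → ℤ} {c0 : ℤ} :
    a ≤ Fin.snoc w c0 ↔ (Fin.init a ≤ w ∧ a (Fin.last n) ≤ c0) := by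
  constructor
  · intro h
    refine ⟨fun i => ?_, ?_⟩
    · have := h (Fin.castSucc i)
      rwa [Fin.snoc_castSucc] at this
    · have := h (Fin.last n)
      rwa [Fin.snoc_last] at this
  · rintro ⟨h1, h2⟩ i
    refine Fin.lastCases ?_ ?_ i
    · rwa [Fin.snoc_last]
    · intro j
      rw [Fin.snoc_castSucc]
      exact h1 j

lemma snoc_le_snoc {w : Fin n → ℤ} {a b : ℤ} (hab : a ≤ b) :
    Fin.snoc w a ≤ (Fin.snoc w b : Fin (n+1) → ℤ) := by
  intro i
  refine Fin.lastCases ?_ ?_ i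
  · rw [Fin.snoc_last, Fin.snoc_last]; exact hab
  · intro j; rw [Fin.snoc_castSucc, Fin.snoc_castSucc]

variable {ι ι' : Type} (z : ι → (Fin (n+1) → ℤ)) (c0 : ℤ) (w : Fin n → ℤ)

def projS : Slice (k := k) z (Fin.snoc w c0) →ₗ[k]
    Slice (k := k) (fun t : {t : ι // z t (Fin.last n) = c0} => Fin.init (z t.1)) w where
  toFun f := ⟨fun t => f.1 t.1, by
    intro t ht
    refine f.2 t.1 fun hle => ht ?_
    exact (le_snoc_iff.mp hle).1⟩
  map_add' f g := rfl
  map_smul' a f := rfl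

lemma projS_surjective : Function.Surjective (projS (k := k) z c0 w) := by
  intro g
  classical
  refine ⟨⟨fun t => if h : z t (Fin.last n) = c0 then g.1 ⟨t, h⟩ else 0, ?_⟩, ?_⟩
  · intro t ht
    dsimp only
    by_cases h : z t (Fin.last n) = c0
    · rw [dif_pos h]
      refine g.2 ⟨t, h⟩ fun hini => ht ?_
      exact le_snoc_iff.mpr ⟨hini, h ▸ le_rfl⟩
    · rw [dif_neg h]
  · refine Subtype.ext (funext fun t => ?_)
    exact dif_pos t.2

lemma exact_inclS_projS :
    Function.Exact (inclS (k := k) (z := z) (snoc_le_snoc (w := w) (by omega : c0 - 1 ≤ c0)))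
      (projS (k := k) z c0 w) := by
  intro f
  constructor
  · intro hf
    have hcomp : ∀ t : {t : ι // z t (Fin.last n) = c0}, f.1 t.1 = 0 := by
      intro t
      exact congrArg (fun (q : Slice (k := k)
        (fun t : {t : ι // z t (Fin.last n) = c0} => Fin.init (z t.1)) w) => q.1 t) hf
    have hmem : f.1 ∈ Slice (k := k) z (Fin.snoc w (c0 - 1)) := by
      intro t ht
      by_cases h : z t (Fin.last n) = c0
      · exact hcomp ⟨t, h⟩
      · refine f.2 t fun hle => ht ?_
        obtain ⟨h1, h2⟩ := le_snoc_iff.mp hle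
        refine le_snoc_iff.mpr ⟨h1, ?_⟩
        omega
    exact ⟨⟨f.1, hmem⟩, Subtype.ext rfl⟩
  · rintro ⟨f0, rfl⟩
    refine Subtype.ext (funext fun t => ?_)
    refine f0.2 t.1 fun hle => ?_
    have h2 := (le_snoc_iff.mp hle).2
    have := t.2
    omega

variable [Fintype ι]

lemma projS_comm (z' : ι' → (Fin (n+1) → ℤ)) (c : ι' → ι → k)
    (hc : ∀ s t, c s t ≠ 0 → z' s ≤ z t)
    (f : Slice (k := k) z (Fin.snoc w c0)) :
    projS (k := k) z' c0 w (Dmap c hc (Fin.snoc w c0) f) =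
      Dmap (fun (s : {s : ι' // z' s (Fin.last n) = c0})
              (t : {t : ι // z t (Fin.last n) = c0}) => c s.1 t.1)
        (fun s t h j => hc s.1 t.1 h (Fin.castSucc j)) w (projS (k := k) z c0 w f) := by
  classical
  refine Subtype.ext (funext fun s => ?_)
  show ∑ t : ι, c s.1 t * f.1 t
      = ∑ t : {t : ι // z t (Fin.last n) = c0}, c s.1 t.1 * f.1 t.1
  rw [← Finset.sum_subtype (Finset.univ.filter (fun t : ι => z t (Fin.last n) = c0))
      (by simp) (fun t => c s.1 t * f.1 t)]
  rw [Finset.sum_filter_of_ne]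
  intro t _ hne
  have hcne : c s.1 t ≠ 0 := fun h => hne (by rw [h, zero_mul])
  have hfne : f.1 t ≠ 0 := fun h => hne (by rw [h, mul_zero])
  have h1 : z' s.1 ≤ z t := hc s.1 t hcne
  have h2 : z t ≤ Fin.snoc w c0 := by
    by_contra hzt
    exact hfne (f.2 t hzt)
  have h3 := (le_snoc_iff.mp h2).2
  have h4 : z' s.1 (Fin.last n) ≤ z t (Fin.last n) := h1 (Fin.last n)
  have h5 : z' s.1 (Fin.last n) = c0 := s.2
  show z t (Fin.last n) = c0
  omega

lemma projS_dd {ι1 ι2 : Type} [Fintype ι'] [Fintype ι2]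
    (z1 : ι1 → (Fin (n+1) → ℤ)) (z' : ι' → (Fin (n+1) → ℤ)) (z2 : ι2 → (Fin (n+1) → ℤ))
    (c1 : ι1 → ι' → k) (hc1 : ∀ s t, c1 s t ≠ 0 → z1 s ≤ z' t)
    (c2 : ι' → ι2 → k) (hc2 : ∀ s t, c2 s t ≠ 0 → z' s ≤ z2 t)
    (hdd : ∀ x, Dmap c1 hc1 (Fin.snoc w c0) (Dmap c2 hc2 (Fin.snoc w c0) x) = 0)
    (x : Slice (k := k) (fun t : {t : ι2 // z2 t (Fin.last n) = c0} => Fin.init (z2 t.1)) w) :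
    Dmap (fun (s : {s : ι1 // z1 s (Fin.last n) = c0})
            (t : {t : ι' // z' t (Fin.last n) = c0}) => c1 s.1 t.1)
        (fun s t h j => hc1 s.1 t.1 h (Fin.castSucc j)) w
      (Dmap (fun (s : {s : ι' // z' s (Fin.last n) = c0})
              (t : {t : ι2 // z2 t (Fin.last n) = c0}) => c2 s.1 t.1)
          (fun s t h j => hc2 s.1 t.1 h (Fin.castSucc j)) w x) = 0 := by
  obtain ⟨y, rfl⟩ := projS_surjective z2 c0 w x
  rw [← projS_comm z2 c0 w z' c2 hc2 y,
    ← projS_comm z' c0 w z1 c1 hc1 (Dmap c2 hc2 (Fin.snoc w c0) y),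
    hdd, map_zero]
  rfl

end Reduce

section ChasePart

variable {k : Type} [Field k]

section Exactness

lemma exact_of_subsingleton_mid {A B C : Type*} [Zero B] [Zero C]
    [Subsingleton B] (f : A → B) (g : B → C) (hg : g 0 = 0) (a : A) :
    Function.Exact f g := by
  intro y
  rw [Subsingleton.elim y 0]
  exact ⟨fun _ => ⟨a, Subsingleton.elim _ _⟩, fun _ => hg⟩

lemma exact_of_ladder {A B C A' B' C' : Type*} [Zero C] [Zero C']
    {f : A → B} {g : B → C} {f' : A' → B'} {g' : B' → C'}
    (eA : A ≃ A') (eB : B ≃ B') (eC : C ≃ C')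
    (hf : ∀ a, eB (f a) = f' (eA a)) (hg : ∀ b, eC (g b) = g' (eB b)) (h0 : eC 0 = 0)
    (h : Function.Exact f g) : Function.Exact f' g' := by
  intro y
  obtain ⟨b, rfl⟩ := eB.surjective y
  rw [← hg]
  constructor
  · intro h1
    have hb : g b = 0 := eC.injective (by rw [h1, h0])
    obtain ⟨a, rfl⟩ := (h b).mp hb
    exact ⟨eA a, (hf a).symm⟩
  · rintro ⟨a', ha⟩
    obtain ⟨a, rfl⟩ := eA.surjective a'
    have hb : f a = b := eB.injective (by rw [hf, ha])
    rw [← hb, (h (f a)).mpr ⟨a, rfl⟩, h0]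

end Exactness

section Chase

variable {A B C : ℕ → Type}
variable [∀ i, AddCommGroup (A i)] [∀ i, Module k (A i)]
variable [∀ i, AddCommGroup (B i)] [∀ i, Module k (B i)]
variable [∀ i, AddCommGroup (C i)] [∀ i, Module k (C i)]
variable (dA : ∀ i, A (i+1) →ₗ[k] A i) (dB : ∀ i, B (i+1) →ₗ[k] B i)
variable (dC : ∀ i, C (i+1) →ₗ[k] C i)
variable (f : ∀ i, A i →ₗ[k] B i) (g : ∀ i, B i →ₗ[k] C i)
variable (hf : ∀ i, Function.Injective (f i)) (hg : ∀ i, Function.Surjective (g i))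
variable (hfg : ∀ i, Function.Exact (f i) (g i))
variable (hcf : ∀ i x, f i (dA i x) = dB i (f (i+1) x))
variable (hcg : ∀ i x, g i (dB i x) = dC i (g (i+1) x))
variable (hddB : ∀ i x, dB i (dB (i+1) x) = 0)

include hf hg hfg hcf hcg hddB in
lemma chase1 (i : ℕ) (hB : Function.Exact (dB (i+2)) (dB (i+1)))
    (hA : Function.Exact (dA (i+1)) (dA i)) :
    Function.Exact (dC (i+2)) (dC (i+1)) := by
  intro c0
  constructor
  · intro hc0
    obtain ⟨b, rfl⟩ := hg (i+2) c0
    have h1 : g (i+1) (dB (i+1) b) = 0 := by rw [hcg]; exact hc0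
    obtain ⟨a, ha⟩ := ((hfg (i+1)) _).mp h1
    have h2 : f i (dA i a) = 0 := by rw [hcf, ha, hddB]
    have h3 : dA i a = 0 := hf i (by rw [h2, map_zero])
    obtain ⟨a', ha'⟩ := (hA _).mp h3
    have h4 : dB (i+1) (b - f (i+2) a') = 0 := by
      rw [map_sub, ← hcf, ha', ha, sub_self]
    obtain ⟨b3, hb3⟩ := (hB _).mp h4
    refine ⟨g (i+3) b3, ?_⟩
    have : g (i+2) (dB (i+2) b3) = g (i+2) b - g (i+2) (f (i+2) a') := by
      rw [hb3, map_sub]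
    rw [← hcg, this, (hfg (i+2)).apply_apply_eq_zero, sub_zero]
  · rintro ⟨c', rfl⟩
    obtain ⟨b'', rfl⟩ := hg (i+3) c'
    rw [← hcg, ← hcg, hddB, map_zero]

include hf hg hfg hcf hcg hddB in
lemma chase2 (i : ℕ) (hC : Function.Exact (dC (i+2)) (dC (i+1)))
    (hB2 : Function.Exact (dB (i+2)) (dB (i+1)))
    (hB1 : Function.Exact (dB (i+1)) (dB i)) :
    Function.Exact (dA (i+1)) (dA i) := by
  intro a
  constructor
  · intro ha
    have h1 : dB i (f (i+1) a) = 0 := by rw [← hcf, ha, map_zero]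
    obtain ⟨b, hb⟩ := (hB1 _).mp h1
    have h2 : dC (i+1) (g (i+2) b) = 0 := by
      rw [← hcg, hb, (hfg (i+1)).apply_apply_eq_zero]
    obtain ⟨c', hc'⟩ := (hC _).mp h2
    obtain ⟨b', rfl⟩ := hg (i+3) c'
    have h3 : g (i+2) (b - dB (i+2) b') = 0 := by
      rw [map_sub, hcg, hc', sub_self]
    obtain ⟨a', ha'⟩ := ((hfg (i+2)) _).mp h3
    refine ⟨a', hf (i+1) ?_⟩
    rw [hcf, ha', map_sub, hb, hddB, sub_zero]
  · rintro ⟨a', rfl⟩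
    apply hf i
    rw [hcf, hcf, hddB, map_zero]

end Chase

end ChasePart

section KEY

variable {k : Type} [Field k]

lemma KEY0 {n : ℕ} (ι : ℕ → Type) [instF : ∀ i, Fintype (ι i)]
    (z : ∀ i, ι i → (Fin n → ℤ)) (c : ∀ i, ι i → ι (i+1) → k)
    (hc : ∀ i s t, c i s t ≠ 0 → z i s ≤ z (i+1) t) (q m : ℕ)
    (hr : ∀ i, m < i → IsEmpty (ι i))
    (hne : ∃ v, ¬ Function.Exact (Dmap (c (q+1)) (hc (q+1)) v) (Dmap (c q) (hc q) v)) :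
    q + 1 ≤ m := by
  by_contra hqm
  push_neg at hqm
  obtain ⟨v, hv⟩ := hne
  haveI : IsEmpty (ι (q+1)) := hr _ (by omega)
  exact hv (exact_of_subsingleton_mid _ _ (map_zero _) 0)

lemma KEY (n : ℕ) :
    ∀ (ι : ℕ → Type) [instF : ∀ i, Fintype (ι i)]
      (z : ∀ i, ι i → (Fin n → ℤ)) (c : ∀ i, ι i → ι (i+1) → k)
      (hc : ∀ i s t, c i s t ≠ 0 → z i s ≤ z (i+1) t) (q m : ℕ),
      (∀ i, m < i → IsEmpty (ι i)) →
      (∀ i v x, Dmap (c i) (hc i) v (Dmap (c (i+1)) (hc (i+1)) v x) = 0) →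
      (∀ i, q < i → ∀ v, Function.Exact (Dmap (c (i+1)) (hc (i+1)) v) (Dmap (c i) (hc i) v)) →
      {v | ¬ Function.Exact (Dmap (c (q+1)) (hc (q+1)) v) (Dmap (c q) (hc q) v)}.Finite →
      (∃ v, ¬ Function.Exact (Dmap (c (q+1)) (hc (q+1)) v) (Dmap (c q) (hc q) v)) →
      q + 1 + n ≤ m := by
  induction n with
  | zero =>
    intro ι instF z c hc q m hr hdd hvan hfin hne
    simpa using KEY0 ι z c hc q m hr hne
  | succ n ih =>
    intro ι instF z c hc q m hr hdd hvan hfin hne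
    obtain ⟨v0, hv0⟩ := hne
    obtain ⟨vstar, hvstar_mem, hvstar_max⟩ :=
      Set.Finite.exists_maximalFor (fun v => v (Fin.last n)) _ hfin ⟨v0, hv0⟩
    set c0 : ℤ := vstar (Fin.last n) + 1 with hc0def
    have hmax : ∀ v, ¬ Function.Exact (Dmap (c (q+1)) (hc (q+1)) v) (Dmap (c q) (hc q) v) →
        v (Fin.last n) ≤ vstar (Fin.last n) := by
      intro v hv
      by_contra h
      push_neg at h
      have : v (Fin.last n) ≤ vstar (Fin.last n) := hvstar_max hv (le_of_lt h)
      omega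
    have hb : (c0 : ℤ) - 1 ≤ c0 := by omega
    have hc' : ∀ i (s : {s : ι i // z i s (Fin.last n) = c0})
        (t : {t : ι (i+1) // z (i+1) t (Fin.last n) = c0}),
        (fun s t => c i s.1 t.1) s t ≠ 0 →
          (fun (t : {t : ι i // z i t (Fin.last n) = c0}) => Fin.init (z i t.1)) s ≤
          (fun (t : {t : ι (i+1) // z (i+1) t (Fin.last n) = c0}) => Fin.init (z (i+1) t.1)) t :=
      fun i s t h j => hc i s.1 t.1 h (Fin.castSucc j)
    -- the reduction at each grade w, via the two diagram chases
    have hred1 : ∀ (w : Fin n → ℤ) (i0 : ℕ),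
        Function.Exact (Dmap (c (i0+2)) (hc (i0+2)) (Fin.snoc w c0))
          (Dmap (c (i0+1)) (hc (i0+1)) (Fin.snoc w c0)) →
        Function.Exact (Dmap (c (i0+1)) (hc (i0+1)) (Fin.snoc w (c0-1)))
          (Dmap (c i0) (hc i0) (Fin.snoc w (c0-1))) →
        Function.Exact
          (Dmap (fun (s : {s : ι (i0+2) // z (i0+2) s (Fin.last n) = c0})
                     (t : {t : ι (i0+3) // z (i0+3) t (Fin.last n) = c0}) =>
                   c (i0+2) s.1 t.1) (hc' (i0+2)) w)
          (Dmap (fun (s : {s : ι (i0+1) // z (i0+1) s (Fin.last n) = c0})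
                     (t : {t : ι (i0+2) // z (i0+2) t (Fin.last n) = c0}) =>
                   c (i0+1) s.1 t.1) (hc' (i0+1)) w) := by
      intro w i0 hB hA
      exact chase1
        (A := fun j => Slice (k := k) (z j) (Fin.snoc w (c0-1)))
        (B := fun j => Slice (k := k) (z j) (Fin.snoc w c0))
        (C := fun j => Slice (k := k)
          (fun t : {t : ι j // z j t (Fin.last n) = c0} => Fin.init (z j t.1)) w)
        (fun j => Dmap (c j) (hc j) (Fin.snoc w (c0-1)))
        (fun j => Dmap (c j) (hc j) (Fin.snoc w c0))
        (fun j => Dmap (fun s t => c j s.1 t.1) (hc' j) w)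
        (fun j => inclS (snoc_le_snoc hb))
        (fun j => projS (z j) c0 w)
        (fun j => inclS_injective _)
        (fun j => projS_surjective (z j) c0 w)
        (fun j => exact_inclS_projS (z j) c0 w)
        (fun j x => inclS_comm (c j) (hc j) (snoc_le_snoc hb) x)
        (fun j x => by exact projS_comm (z (j+1)) c0 w (z j) (c j) (hc j) x)
        (fun j x => hdd j (Fin.snoc w c0) x)
        i0 hB hA
    have hred2 : ∀ (w : Fin n → ℤ) (i0 : ℕ),
        Function.Exact
          (Dmap (fun (s : {s : ι (i0+2) // z (i0+2) s (Fin.last n) = c0})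
                     (t : {t : ι (i0+3) // z (i0+3) t (Fin.last n) = c0}) =>
                   c (i0+2) s.1 t.1) (hc' (i0+2)) w)
          (Dmap (fun (s : {s : ι (i0+1) // z (i0+1) s (Fin.last n) = c0})
                     (t : {t : ι (i0+2) // z (i0+2) t (Fin.last n) = c0}) =>
                   c (i0+1) s.1 t.1) (hc' (i0+1)) w) →
        Function.Exact (Dmap (c (i0+2)) (hc (i0+2)) (Fin.snoc w c0))
          (Dmap (c (i0+1)) (hc (i0+1)) (Fin.snoc w c0)) →
        Function.Exact (Dmap (c (i0+1)) (hc (i0+1)) (Fin.snoc w c0))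
          (Dmap (c i0) (hc i0) (Fin.snoc w c0)) →
        Function.Exact (Dmap (c (i0+1)) (hc (i0+1)) (Fin.snoc w (c0-1)))
          (Dmap (c i0) (hc i0) (Fin.snoc w (c0-1))) := by
      intro w i0 hC hB2 hB1
      exact chase2
        (A := fun j => Slice (k := k) (z j) (Fin.snoc w (c0-1)))
        (B := fun j => Slice (k := k) (z j) (Fin.snoc w c0))
        (C := fun j => Slice (k := k)
          (fun t : {t : ι j // z j t (Fin.last n) = c0} => Fin.init (z j t.1)) w)
        (fun j => Dmap (c j) (hc j) (Fin.snoc w (c0-1)))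
        (fun j => Dmap (c j) (hc j) (Fin.snoc w c0))
        (fun j => Dmap (fun s t => c j s.1 t.1) (hc' j) w)
        (fun j => inclS (snoc_le_snoc hb))
        (fun j => projS (z j) c0 w)
        (fun j => inclS_injective _)
        (fun j => projS_surjective (z j) c0 w)
        (fun j => exact_inclS_projS (z j) c0 w)
        (fun j x => inclS_comm (c j) (hc j) (snoc_le_snoc hb) x)
        (fun j x => by exact projS_comm (z (j+1)) c0 w (z j) (c j) (hc j) x)
        (fun j x => hdd j (Fin.snoc w c0) x)
        i0 hC hB2 hB1
    have hkey := ih (fun i => {t : ι i // z i t (Fin.last n) = c0}) 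
      (fun i t => Fin.init (z i t.1))
      (fun i s t => c i s.1 t.1) hc' (q+1) m
      (fun i hi => ⟨fun t => (hr i hi).false t.1⟩)
      ?_ ?_ ?_ ?_
    · omega
    · -- d ∘ d = 0 for the reduced complex
      intro i w x
      exact projS_dd c0 w (z i) (z (i+1)) (z (i+2)) (c i) (hc i) (c (i+1)) (hc (i+1))
        (fun y => hdd i (Fin.snoc w c0) y) x
    · -- vanishing above q+1
      intro i hi w
      obtain ⟨i0, rfl⟩ : ∃ i0, i = i0 + 1 := ⟨i - 1, by omega⟩
      exact hred1 w i0 (hvan (i0+1) (by omega) _) (hvan i0 (by omega) _)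
    · -- finiteness of the bad set for the reduced complex
      have hsnocinj : Function.Injective
          (fun w : Fin n → ℤ => (Fin.snoc w (c0-1) : Fin (n+1) → ℤ)) := by
        intro w1 w2 h
        funext j
        simpa [Fin.snoc_castSucc] using congrFun h (Fin.castSucc j)
      refine Set.Finite.subset (hfin.preimage hsnocinj.injOn) ?_
      intro w hw
      simp only [Set.mem_preimage, Set.mem_setOf_eq]
      intro hA
      exact hw (hred1 w q (hvan (q+1) (by omega) _) hA)
    · -- nonvanishing for the reduced complex at Fin.init vstar
      refine ⟨Fin.init vstar, fun hC => ?_⟩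
      have hv_not : ¬ ¬ Function.Exact
          (Dmap (c (q+1)) (hc (q+1)) (Fin.snoc (Fin.init vstar) c0))
          (Dmap (c q) (hc q) (Fin.snoc (Fin.init vstar) c0)) := by
        intro hmem
        have := hmax _ hmem
        rw [Fin.snoc_last] at this
        omega
      have hA := hred2 (Fin.init vstar) q hC (hvan (q+1) (by omega) _) (not_not.mp hv_not)
      have hu : Fin.snoc (Fin.init vstar) (c0-1) = vstar := by
        rw [show c0 - 1 = vstar (Fin.last n) by omega]
        exact Fin.snoc_init_self vstar
      rw [hu] at hA
      exact hvstar_mem hA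

end KEY

section Interface

open CategoryTheory Limits

variable (k : Type) [Field k] (n : ℕ)

/-- The canonical generator of `F(a)` at grade `a`. -/
def oneF (a : Fin n → ℤ) : (freeF k n a).obj a := ⟨1, Or.inl fun i => le_rfl⟩

/-- The scalar classifying a morphism `F(a) ⟶ F(b)`. -/
def scal {a b : Fin n → ℤ} (η : freeF k n a ⟶ freeF k n b) : k :=
  ((η.app a) (oneF k n a)).1

lemma scal_support {a b : Fin n → ℤ} (η : freeF k n a ⟶ freeF k n b)
    (h : scal k n η ≠ 0) : ∀ i, b i ≤ a i := by
  rcases ((η.app a) (oneF k n a)).2 with hle | h0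
  · exact hle
  · exact absurd h0 h

lemma scal_spec {a b : Fin n → ℤ} (η : freeF k n a ⟶ freeF k n b)
    (v : Fin n → ℤ) (x : (freeF k n a).obj v) :
    ((η.app v) x).1 = scal k n η * x.1 := by
  by_cases h : ∀ i, a i ≤ v i
  · have hle : a ≤ v := fun i => h i
    have hnat := congrArg (fun (φ : (freeF k n a).obj a ⟶ (freeF k n b).obj v) =>
      φ (⟨x.1, Or.inl fun i => le_rfl⟩ : (freeF k n a).obj a))
      (η.naturality (homOfLE hle))
    have hmapx : ((freeF k n a).map (homOfLE hle))
        (⟨x.1, Or.inl fun i => le_rfl⟩ : (freeF k n a).obj a) = x := Subtype.ext rfl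
    have hnat2 : (η.app v) x = ((freeF k n b).map (homOfLE hle))
        ((η.app a) (⟨x.1, Or.inl fun i => le_rfl⟩ : (freeF k n a).obj a)) := by
      calc (η.app v) x
          = (η.app v) (((freeF k n a).map (homOfLE hle))
              (⟨x.1, Or.inl fun i => le_rfl⟩ : (freeF k n a).obj a)) := by rw [hmapx]
        _ = ((freeF k n b).map (homOfLE hle))
              ((η.app a) (⟨x.1, Or.inl fun i => le_rfl⟩ : (freeF k n a).obj a)) := hnat
    have hx0s : (⟨x.1, Or.inl fun i => le_rfl⟩ : (freeF k n a).obj a)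
        = x.1 • oneF k n a := Subtype.ext (by
      show (x.1 : k) = x.1 • (1 : k)
      rw [smul_eq_mul, mul_one])
    have heta : (η.app a) (⟨x.1, Or.inl fun i => le_rfl⟩ : (freeF k n a).obj a)
        = x.1 • (η.app a) (oneF k n a) := by
      rw [hx0s, map_smul]
    rw [hnat2, heta, mul_comm]
    rfl
  · have hx1 : x.1 = 0 := by
      rcases x.2 with hle | h0
      · exact absurd hle h
      · exact h0
    have hx : x = 0 := Subtype.ext hx1
    rw [hx, map_zero]
    exact (mul_zero _).symm

variable {r : ℕ}

/-- Evaluation of a finite biproduct of `freeF`s, as a concrete `Slice`. -/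
noncomputable def PhiL (zf : Fin r → (Fin n → ℤ)) (v : Fin n → ℤ) :
    ((⨁ fun t : Fin r => freeF k n (zf t)).obj v) →ₗ[k] Slice (k := k) zf v where
  toFun x := ⟨fun t => ((biproduct.π (fun t : Fin r => freeF k n (zf t)) t).app v x).1, by
    intro t ht
    rcases ((biproduct.π (fun t : Fin r => freeF k n (zf t)) t).app v x).2 with hle | h0
    · exact absurd (fun i => hle i) ht
    · exact h0⟩
  map_add' x y := Subtype.ext (funext fun t => by
    show ((biproduct.π (fun t : Fin r => freeF k n (zf t)) t).app v (x + y)).1 = _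
    rw [map_add]
    rfl)
  map_smul' a x := Subtype.ext (funext fun t => by
    show ((biproduct.π (fun t : Fin r => freeF k n (zf t)) t).app v (a • x)).1 = _
    rw [map_smul]
    rfl)

lemma mem_gate_of_slice (zf : Fin r → (Fin n → ℤ)) (v : Fin n → ℤ)
    (f : Slice (k := k) zf v) (t : Fin r) :
    (∀ i, zf t i ≤ v i) ∨ f.1 t = 0 := by
  by_cases h : ∀ i, zf t i ≤ v i
  · exact Or.inl h
  · exact Or.inr (f.2 t fun hle => h fun i => hle i)

/-- Inverse to `PhiL`. -/
noncomputable def PsiL (zf : Fin r → (Fin n → ℤ)) (v : Fin n → ℤ) :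
    Slice (k := k) zf v →ₗ[k] ((⨁ fun t : Fin r => freeF k n (zf t)).obj v) where
  toFun f := ∑ t : Fin r, (biproduct.ι (fun t : Fin r => freeF k n (zf t)) t).app v
    ⟨f.1 t, mem_gate_of_slice k n zf v f t⟩
  map_add' f g := by
    rw [← Finset.sum_add_distrib]
    refine Finset.sum_congr rfl fun t _ => ?_
    refine Eq.trans ?_ (map_add _ _ _)
    exact congrArg _ (Subtype.ext rfl)
  map_smul' a f := by
    simp only [RingHom.id_apply]
    rw [Finset.smul_sum]
    refine Finset.sum_congr rfl fun t _ => ?_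
    refine Eq.trans ?_ (map_smul _ _ _)
    exact congrArg _ (Subtype.ext rfl)

lemma PhiL_PsiL (zf : Fin r → (Fin n → ℤ)) (v : Fin n → ℤ) (f : Slice (k := k) zf v) :
    PhiL k n zf v (PsiL k n zf v f) = f := by
  refine Subtype.ext (funext fun s => ?_)
  show ((biproduct.π (fun t : Fin r => freeF k n (zf t)) s).app v
    (∑ t : Fin r, (biproduct.ι (fun t : Fin r => freeF k n (zf t)) t).app v
      ⟨f.1 t, mem_gate_of_slice k n zf v f t⟩)).1 = f.1 s
  rw [map_sum]
  rw [Finset.sum_eq_single s]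
  · have hcomp : ((biproduct.π (fun t : Fin r => freeF k n (zf t)) s).app v)
        (((biproduct.ι (fun t : Fin r => freeF k n (zf t)) s).app v)
          (⟨f.1 s, mem_gate_of_slice k n zf v f s⟩ : (freeF k n (zf s)).obj v))
        = (⟨f.1 s, mem_gate_of_slice k n zf v f s⟩ : (freeF k n (zf s)).obj v) :=
      congrArg (fun (φ : freeF k n (zf s) ⟶ freeF k n (zf s)) => (φ.app v)
        (⟨f.1 s, mem_gate_of_slice k n zf v f s⟩ : (freeF k n (zf s)).obj v))
        (biproduct.ι_π_self (fun t : Fin r => freeF k n (zf t)) s)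
    rw [hcomp]
  · intro t _ hts
    have hcomp : ((biproduct.π (fun t : Fin r => freeF k n (zf t)) s).app v)
        (((biproduct.ι (fun t : Fin r => freeF k n (zf t)) t).app v)
          (⟨f.1 t, mem_gate_of_slice k n zf v f t⟩ : (freeF k n (zf t)).obj v))
        = ((0 : freeF k n (zf t) ⟶ freeF k n (zf s)).app v)
          (⟨f.1 t, mem_gate_of_slice k n zf v f t⟩ : (freeF k n (zf t)).obj v) :=
      congrArg (fun (φ : freeF k n (zf t) ⟶ freeF k n (zf s)) => (φ.app v)
        (⟨f.1 t, mem_gate_of_slice k n zf v f t⟩ : (freeF k n (zf t)).obj v))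
        (biproduct.ι_π_ne (fun t : Fin r => freeF k n (zf t)) hts)
    rw [hcomp, NatTrans.app_zero]
    rfl
  · intro hs
    exact absurd (Finset.mem_univ s) hs

lemma PsiL_PhiL (zf : Fin r → (Fin n → ℤ)) (v : Fin n → ℤ)
    (x : (⨁ fun t : Fin r => freeF k n (zf t)).obj v) :
    PsiL k n zf v (PhiL k n zf v x) = x := by
  show (∑ t : Fin r, (biproduct.ι (fun t : Fin r => freeF k n (zf t)) t).app v
    (⟨(PhiL k n zf v x).1 t, mem_gate_of_slice k n zf v (PhiL k n zf v x) t⟩ :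
      (freeF k n (zf t)).obj v)) = x
  have h2 : ∀ t : Fin r,
      (biproduct.ι (fun t : Fin r => freeF k n (zf t)) t).app v
        (⟨(PhiL k n zf v x).1 t, mem_gate_of_slice k n zf v (PhiL k n zf v x) t⟩ :
          (freeF k n (zf t)).obj v)
      = ((biproduct.π (fun t : Fin r => freeF k n (zf t)) t ≫
          biproduct.ι (fun t : Fin r => freeF k n (zf t)) t).app v) x := by
    intro t
    exact congrArg ((biproduct.ι (fun t : Fin r => freeF k n (zf t)) t).app v)
      (Subtype.ext rfl)
  rw [Finset.sum_congr rfl fun t _ => h2 t]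
  have h3 : ∑ t : Fin r, ((biproduct.π (fun t : Fin r => freeF k n (zf t)) t ≫
      biproduct.ι (fun t : Fin r => freeF k n (zf t)) t).app v) x
      = ((∑ t : Fin r, biproduct.π (fun t : Fin r => freeF k n (zf t)) t ≫
        biproduct.ι (fun t : Fin r => freeF k n (zf t)) t).app v) x := by
    rw [NatTrans.app_sum]
    exact ((LinearMap.congr_fun (ModuleCat.hom_sum (fun t : Fin r =>
      (biproduct.π (fun t : Fin r => freeF k n (zf t)) t ≫
        biproduct.ι (fun t : Fin r => freeF k n (zf t)) t).app v) Finset.univ) x).trans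
      (LinearMap.sum_apply _ _ _)).symm
  rw [h3, biproduct.total]
  rfl

/-- The bridge equivalence. -/
noncomputable def PhiEquiv (zf : Fin r → (Fin n → ℤ)) (v : Fin n → ℤ) :
    ((⨁ fun t : Fin r => freeF k n (zf t)).obj v) ≃ₗ[k] Slice (k := k) zf v :=
  LinearEquiv.ofLinear (PhiL k n zf v) (PsiL k n zf v)
    (LinearMap.ext fun f => PhiL_PsiL k n zf v f)
    (LinearMap.ext fun x => PsiL_PhiL k n zf v x)

/-- The matrix of a morphism between finite biproducts of `freeF`s. -/
noncomputable def matc {r' : ℕ} (zf : Fin r → (Fin n → ℤ)) (zf' : Fin r' → (Fin n → ℤ))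
    (δ : (⨁ fun t : Fin r' => freeF k n (zf' t)) ⟶ (⨁ fun t : Fin r => freeF k n (zf t)))
    (s : Fin r) (t : Fin r') : k :=
  scal k n (biproduct.ι (fun t : Fin r' => freeF k n (zf' t)) t ≫ δ ≫
    biproduct.π (fun t : Fin r => freeF k n (zf t)) s)

lemma matc_support {r' : ℕ} (zf : Fin r → (Fin n → ℤ)) (zf' : Fin r' → (Fin n → ℤ))
    (δ : (⨁ fun t : Fin r' => freeF k n (zf' t)) ⟶ (⨁ fun t : Fin r => freeF k n (zf t)))
    (s : Fin r) (t : Fin r') (h : matc k n zf zf' δ s t ≠ 0) : zf s ≤ zf' t :=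
  fun i => scal_support k n _ h i

lemma PhiL_comm {r' : ℕ} (zf : Fin r → (Fin n → ℤ)) (zf' : Fin r' → (Fin n → ℤ))
    (δ : (⨁ fun t : Fin r' => freeF k n (zf' t)) ⟶ (⨁ fun t : Fin r => freeF k n (zf t)))
    (v : Fin n → ℤ) (x : (⨁ fun t : Fin r' => freeF k n (zf' t)).obj v) :
    PhiL k n zf v (δ.app v x)
      = Dmap (matc k n zf zf' δ) (matc_support k n zf zf' δ) v (PhiL k n zf' v x) := by
  refine Subtype.ext (funext fun s => ?_)
  show ((biproduct.π (fun t : Fin r => freeF k n (zf t)) s).app v (δ.app v x)).1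
    = ∑ t : Fin r', matc k n zf zf' δ s t *
        ((biproduct.π (fun t : Fin r' => freeF k n (zf' t)) t).app v x).1
  have hx : x = ((∑ t : Fin r', biproduct.π (fun t : Fin r' => freeF k n (zf' t)) t ≫
      biproduct.ι (fun t : Fin r' => freeF k n (zf' t)) t).app v) x := by
    rw [biproduct.total]
    rfl
  conv_lhs => rw [hx]
  have hs : ∀ y, ((∑ t : Fin r', (biproduct.π (fun t : Fin r' => freeF k n (zf' t)) t ≫
      biproduct.ι (fun t : Fin r' => freeF k n (zf' t)) t).app v :
        (⨁ fun t : Fin r' => freeF k n (zf' t)).obj v ⟶ (⨁ fun t : Fin r' => freeF k n (zf' t)).obj v) y)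
      = ∑ t : Fin r', ((biproduct.π (fun t : Fin r' => freeF k n (zf' t)) t ≫
        biproduct.ι (fun t : Fin r' => freeF k n (zf' t)) t).app v) y := fun y =>
    (LinearMap.congr_fun (ModuleCat.hom_sum (fun t : Fin r' =>
      (biproduct.π (fun t : Fin r' => freeF k n (zf' t)) t ≫
        biproduct.ι (fun t : Fin r' => freeF k n (zf' t)) t).app v) Finset.univ) y).trans
      (LinearMap.sum_apply _ _ _)
  rw [NatTrans.app_sum, hs, map_sum, map_sum]
  show (∑ t : Fin r', ((biproduct.π (fun t : Fin r => freeF k n (zf t)) s).app v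
    ((δ.app v) (((biproduct.π (fun t : Fin r' => freeF k n (zf' t)) t ≫
      biproduct.ι (fun t : Fin r' => freeF k n (zf' t)) t).app v) x)))).1 = _
  refine (AddSubmonoidClass.coe_finset_sum _ _).trans ?_
  refine Finset.sum_congr rfl fun t _ => ?_
  have hterm : (biproduct.π (fun t : Fin r => freeF k n (zf t)) s).app v
      ((δ.app v) (((biproduct.π (fun t : Fin r' => freeF k n (zf' t)) t ≫
        biproduct.ι (fun t : Fin r' => freeF k n (zf' t)) t).app v) x))
      = ((biproduct.ι (fun t : Fin r' => freeF k n (zf' t)) t ≫ δ ≫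
        biproduct.π (fun t : Fin r => freeF k n (zf t)) s).app v)
        ((biproduct.π (fun t : Fin r' => freeF k n (zf' t)) t).app v x) := rfl
  rw [hterm]
  exact scal_spec k n _ v _

end Interface

section Helpers

lemma surj_ladder_iff {A B A' B' : Type*} (f : A → B) (f' : A' → B') (eA : A ≃ A') (eB : B ≃ B')
    (hcomm : ∀ a, eB (f a) = f' (eA a)) : Function.Surjective f ↔ Function.Surjective f' := by
  constructor
  · intro hs y
    obtain ⟨x, hx⟩ := hs (eB.symm y)
    exact ⟨eA x, by rw [← hcomm, hx, Equiv.apply_symm_apply]⟩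
  · intro hs y
    obtain ⟨x', hx'⟩ := hs (eB y)
    refine ⟨eA.symm x', eB.injective ?_⟩
    rw [hcomm, Equiv.apply_symm_apply, hx']

lemma exact_surj_into_subsingleton {A B C : Type*} [Zero C] [Subsingleton C]
    {f : A → B} {g : B → C} (hf : Function.Surjective f) : Function.Exact f g :=
  fun y => ⟨fun _ => hf y, fun _ => Subsingleton.elim _ _⟩

lemma surjective_of_exact_into_subsingleton {A B C : Type*} [Zero C] [Subsingleton C]
    {f : A → B} {g : B → C} (h : Function.Exact f g) : Function.Surjective f :=
  fun y => (h y).mp (Subsingleton.elim _ _)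

lemma support_finite {α : Type} (f : α → Cardinal.{0}) (h : Cardinal.sum f < Cardinal.aleph0) :
    {a | f a ≠ 0}.Finite := by
  rw [← Cardinal.lt_aleph0_iff_set_finite]
  refine lt_of_le_of_lt ?_ h
  have hsum : Cardinal.sum f = Cardinal.mk (Σ a, Quotient.out (f a)) := by
    calc Cardinal.sum f = Cardinal.sum (fun a => Cardinal.mk (Quotient.out (f a))) := by
          simp [Cardinal.mk_out]
      _ = Cardinal.mk (Σ a, Quotient.out (f a)) := (Cardinal.mk_sigma _).symm
  rw [hsum]
  refine Cardinal.mk_le_of_injective (f := fun (a : {a // f a ≠ 0}) =>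
    (⟨a.1, Nonempty.some (Cardinal.mk_ne_zero_iff.mp (by rw [Cardinal.mk_out]; exact a.2))⟩ :
      Σ a, Quotient.out (f a))) ?_
  intro a b hab
  exact Subtype.ext (congrArg Sigma.fst hab)

/-- The index types of the shifted complex `0 ← F₀ ← F₁ ← ⋯` (with a zero module prepended). -/
def shIota (r : ℕ → ℕ) : ℕ → Type
  | 0 => Empty
  | (i+1) => Fin (r i)

instance shIotaFintype (r : ℕ → ℕ) : ∀ i, Fintype (shIota r i)
  | 0 => inferInstanceAs (Fintype Empty)
  | (i+1) => inferInstanceAs (Fintype (Fin (r i)))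

def shZ {n : ℕ} (r : ℕ → ℕ) (zf : ∀ i, Fin (r i) → (Fin n → ℤ)) :
    ∀ i, shIota r i → (Fin n → ℤ)
  | 0 => fun t => t.elim
  | (i+1) => zf i

def shC {k : Type} (r : ℕ → ℕ) (cm : ∀ i, Fin (r i) → Fin (r (i+1)) → k) :
    ∀ i, shIota r i → shIota r (i+1) → k
  | 0 => fun t _ => t.elim
  | (i+1) => cm i

lemma shHc {k : Type} [Zero k] {n : ℕ} (r : ℕ → ℕ) (zf : ∀ i, Fin (r i) → (Fin n → ℤ))
    (cm : ∀ i, Fin (r i) → Fin (r (i+1)) → k)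
    (hcm : ∀ i s t, cm i s t ≠ 0 → zf i s ≤ zf (i+1) t) :
    ∀ i (s : shIota r i) (t : shIota r (i+1)),
      shC r cm i s t ≠ 0 → shZ r zf i s ≤ shZ r zf (i+1) t
  | 0 => fun s _ _ => s.elim
  | (i+1) => hcm i

end Helpers

end S15

/-- Let `M` be a nonzero persistence module over `ℤⁿ` of finite total
dimension.  Then there is no exact sequence `0 → F_m → ⋯ → F_1 → F_0 → M → 0` with
`m < n` in which every `F_i` is free of finite rank. -/
theorem statement15 (M : (Fin n → ℤ) ⥤ ModuleCat k)
    (hM0 : ¬ ∀ z : Fin n → ℤ, Subsingleton (M.obj z))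
    (hMfd : (Cardinal.sum fun z : Fin n → ℤ => Module.rank k (M.obj z)) < Cardinal.aleph0) :
    ¬ ∃ (m : ℕ), m < n ∧
      ∃ (F : ℕ → ((Fin n → ℤ) ⥤ ModuleCat k)) (d : ∀ i : ℕ, F (i+1) ⟶ F i) (ε : F 0 ⟶ M),
        (∀ i, IsFiniteRankFree k n (F i)) ∧
        (∀ i, m < i → ∀ z : Fin n → ℤ, Subsingleton ((F i).obj z)) ∧
        (∀ z : Fin n → ℤ, Function.Surjective (ε.app z)) ∧
        (∀ z : Fin n → ℤ, Function.Exact ((d 0).app z) (ε.app z)) ∧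
        (∀ (i : ℕ) (z : Fin n → ℤ), Function.Exact ((d (i+1)).app z) ((d i).app z)) := by
  rintro ⟨m, hmn, F, d, ε, hfree, hzero, hsurj, hex0, hexS⟩
  choose r zf hiso using hfree
  have iso : ∀ i, F i ≅ ⨁ fun t : Fin (r i) => freeF k n (zf i t) := fun i => (hiso i).some
  obtain ⟨δ, hδapp⟩ : ∃ (δ : ∀ i, ((⨁ fun t : Fin (r (i+1)) => freeF k n (zf (i+1) t)) ⟶
        (⨁ fun t : Fin (r i) => freeF k n (zf i t)))),
      ∀ (i : ℕ) (v : Fin n → ℤ) (x : (F (i+1)).obj v),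
        ((iso i).hom.app v) (((d i).app v) x) = ((δ i).app v) (((iso (i+1)).hom.app v) x) := by
    refine ⟨fun i => (iso (i+1)).inv ≫ d i ≫ (iso i).hom, ?_⟩
    intro i v x
    have hmor : (iso (i+1)).hom ≫ (iso (i+1)).inv ≫ d i ≫ (iso i).hom
        = d i ≫ (iso i).hom := by
      rw [Iso.hom_inv_id_assoc]
    exact (congrArg (fun (φ : F (i+1) ⟶ ⨁ fun t : Fin (r i) => freeF k n (zf i t)) =>
      (φ.app v) x) hmor).symm
  have hcm : ∀ i, ∀ (s : Fin (r i)) (t : Fin (r (i+1))),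
      S15.matc k n (zf i) (zf (i+1)) (δ i) s t ≠ 0 → zf i s ≤ zf (i+1) t :=
    fun i => S15.matc_support k n (zf i) (zf (i+1)) (δ i)
  have hcomm : ∀ (i : ℕ) (v : Fin n → ℤ) (x : (F (i+1)).obj v),
      S15.PhiL k n (zf i) v (((iso i).hom.app v) (((d i).app v) x))
        = S15.Dmap (S15.matc k n (zf i) (zf (i+1)) (δ i)) (hcm i) v
            (S15.PhiL k n (zf (i+1)) v (((iso (i+1)).hom.app v) x)) := by
    intro i v x
    rw [hδapp]
    exact S15.PhiL_comm k n (zf i) (zf (i+1)) (δ i) v (((iso (i+1)).hom.app v) x)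
  have hexactD : ∀ (i : ℕ) (v : Fin n → ℤ),
      Function.Exact
        (S15.Dmap (S15.matc k n (zf (i+1)) (zf (i+2)) (δ (i+1))) (hcm (i+1)) v)
        (S15.Dmap (S15.matc k n (zf i) (zf (i+1)) (δ i)) (hcm i) v) := by
    intro i v
    refine S15.exact_of_ladder
      (f := ((d (i+1)).app v)) (g := ((d i).app v))
      ((((iso (i+2)).app v).toLinearEquiv.trans (S15.PhiEquiv k n (zf (i+2)) v)).toEquiv)
      ((((iso (i+1)).app v).toLinearEquiv.trans (S15.PhiEquiv k n (zf (i+1)) v)).toEquiv)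
      ((((iso i).app v).toLinearEquiv.trans (S15.PhiEquiv k n (zf i) v)).toEquiv)
      (fun a => by exact hcomm (i+1) v a)
      (fun b => by exact hcomm i v b)
      (by exact map_zero (((iso i).app v).toLinearEquiv.trans (S15.PhiEquiv k n (zf i) v)))
      (hexS i v)
  have hMiff : ∀ v, Function.Surjective
        (S15.Dmap (S15.matc k n (zf 0) (zf 1) (δ 0)) (hcm 0) v)
      ↔ Subsingleton (M.obj v) := by
    intro v
    rw [← S15.surj_ladder_iff ((d 0).app v)
      (S15.Dmap (S15.matc k n (zf 0) (zf 1) (δ 0)) (hcm 0) v)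
      ((((iso 1).app v).toLinearEquiv.trans (S15.PhiEquiv k n (zf 1) v)).toEquiv)
      ((((iso 0).app v).toLinearEquiv.trans (S15.PhiEquiv k n (zf 0) v)).toEquiv)
      (fun a => by exact hcomm 0 v a)]
    constructor
    · intro hs
      refine subsingleton_of_forall_eq 0 fun y => ?_
      obtain ⟨x, hx⟩ := hsurj v y
      obtain ⟨x2, hx2⟩ := hs x
      rw [← hx, ← hx2]
      exact (hex0 v).apply_apply_eq_zero x2
    · intro hsub b
      exact (hex0 v b).mp (Subsingleton.elim _ _)
  haveI hE0 : IsEmpty (S15.shIota r 0) := inferInstanceAs (IsEmpty Empty)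
  have hkey : 0 + 1 + n ≤ m + 1 := by
    refine S15.KEY n (S15.shIota r) (S15.shZ r zf)
      (S15.shC r (fun i => S15.matc k n (zf i) (zf (i+1)) (δ i)))
      (S15.shHc r zf (fun i => S15.matc k n (zf i) (zf (i+1)) (δ i)) hcm) 0 (m+1)
      ?_ ?_ ?_ ?_ ?_
    · -- vanishing of the index types above m+1
      intro i hi
      obtain ⟨i0, rfl⟩ : ∃ i0, i = i0 + 1 := ⟨i - 1, by omega⟩
      show IsEmpty (Fin (r i0))
      by_contra hne
      rw [not_isEmpty_iff] at hne
      obtain ⟨t⟩ := hne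
      haveI hsubF : Subsingleton ((F i0).obj (zf i0 t)) := hzero i0 (by omega) (zf i0 t)
      haveI hsubS : Subsingleton (S15.Slice (k := k) (zf i0) (zf i0 t)) :=
        ((((iso i0).app (zf i0 t)).toLinearEquiv.trans
          (S15.PhiEquiv k n (zf i0) (zf i0 t))).toEquiv).symm.subsingleton
      have hmem : (Pi.single t (1:k)) ∈ S15.Slice (k := k) (zf i0) (zf i0 t) := by
        intro t' ht'
        by_cases h : t' = t
        · subst h
          exact absurd le_rfl ht'
        · exact Pi.single_eq_of_ne h 1
      have hel := Subsingleton.elim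
        (⟨Pi.single t 1, hmem⟩ : S15.Slice (k := k) (zf i0) (zf i0 t)) 0
      have h1 := congrArg
        (fun q : S15.Slice (k := k) (zf i0) (zf i0 t) => q.1 t) hel
      simp only [Pi.single_eq_same] at h1
      exact one_ne_zero h1
    · -- d ∘ d = 0
      intro i v x
      cases i with
      | zero => exact Subsingleton.elim _ _
      | succ i0 => exact (hexactD i0 v).apply_apply_eq_zero x
    · -- exactness in positive degrees
      intro i hi v
      obtain ⟨i0, rfl⟩ : ∃ i0, i = i0 + 1 := ⟨i - 1, by omega⟩
      exact hexactD i0 v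
    · -- finiteness of the homology support in degree zero
      refine Set.Finite.subset
        (S15.support_finite (fun v => Module.rank k (M.obj v)) hMfd) ?_
      intro v hv
      show Module.rank k (M.obj v) ≠ 0
      intro h0
      haveI hsub : Subsingleton (M.obj v) := rank_zero_iff.mp h0
      exact hv (S15.exact_surj_into_subsingleton ((hMiff v).mpr hsub))
    · -- nontriviality of the homology in degree zero
      obtain ⟨v, hv⟩ := not_forall.mp hM0
      refine ⟨v, fun hex => hv ?_⟩
      exact (hMiff v).mp (S15.surjective_of_exact_into_subsingleton hex)
  omega
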